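/- There exists an LTAG₀ grammar generating the crossed-dependency language { aⁿ bᵐ cⁿ dᵐ : n, m ≥ 1 }. -/
import Mathlib


/-- Node labels of LTAG₀ trees: terminals, substitution leaves A↓, substitution
nonterminals, adjunction-marked nodes (T), unmarked adjunction nonterminals and
foot nodes T*. -/
inductive Lab (T NS NA : Type) where
  | term : T → Lab T NS NA        -- terminal leaf
  | substLeaf : NS → Lab T NS NA  -- A↓, awaiting substitution
  | nonterm : NS → Lab T NS NA    -- substitution nonterminal (root/internal)
  | adj : NA → Lab T NS NA        -- (T), adjunction allowed here
  | anode : NA → Lab T NS NA      -- adjunction nonterminal, no adjunction mark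
  | foot : NA → Lab T NS NA       -- T*, foot node of an auxiliary tree

/-- Finitely branching labelled trees. -/
inductive LTree (T NS NA : Type) where
  | node : Lab T NS NA → List (LTree T NS NA) → LTree T NS NA

namespace LTree

variable {T NS NA : Type}

def rootLabel : LTree T NS NA → Lab T NS NA
  | .node l _ => l

mutual
  /-- The yield of a tree: the sequence of terminals at its leaves. -/
  def yield : LTree T NS NA → List T
    | .node (.term a) _ => [a]
    | .node (.substLeaf _) cs => yields cs
    | .node (.nonterm _) cs => yields cs
    | .node (.adj _) cs => yields cs
    | .node (.anode _) cs => yields cs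
    | .node (.foot _) cs => yields cs
  def yields : List (LTree T NS NA) → List T
    | [] => []
    | t :: ts => yield t ++ yields ts
end

mutual
  /-- The number of terminal leaves of a tree. -/
  def termCount : LTree T NS NA → ℕ
    | .node (.term _) _ => 1
    | .node (.substLeaf _) cs => termCounts cs
    | .node (.nonterm _) cs => termCounts cs
    | .node (.adj _) cs => termCounts cs
    | .node (.anode _) cs => termCounts cs
    | .node (.foot _) cs => termCounts cs
  def termCounts : List (LTree T NS NA) → ℕ
    | [] => 0
    | t :: ts => termCount t + termCounts ts
end

mutual
  /-- The number of foot nodes of a tree. -/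
  def footCount : LTree T NS NA → ℕ
    | .node (.foot _) cs => 1 + footCounts cs
    | .node (.term _) cs => footCounts cs
    | .node (.substLeaf _) cs => footCounts cs
    | .node (.nonterm _) cs => footCounts cs
    | .node (.adj _) cs => footCounts cs
    | .node (.anode _) cs => footCounts cs
  def footCounts : List (LTree T NS NA) → ℕ
    | [] => 0
    | t :: ts => footCount t + footCounts ts
end

mutual
  /-- A tree is complete when all of its leaves are terminal leaves. -/
  def Complete : LTree T NS NA → Prop
    | .node (.term _) cs => cs = []
    | .node (.substLeaf _) _ => False
    | .node (.foot _) _ => False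
    | .node (.nonterm _) cs => cs ≠ [] ∧ CompleteList cs
    | .node (.adj _) cs => cs ≠ [] ∧ CompleteList cs
    | .node (.anode _) cs => cs ≠ [] ∧ CompleteList cs
  def CompleteList : List (LTree T NS NA) → Prop
    | [] => True
    | t :: ts => Complete t ∧ CompleteList ts
end

/-- The subtree relation. -/
inductive Subtree : LTree T NS NA → LTree T NS NA → Prop
  | refl (t : LTree T NS NA) : Subtree t t
  | child {s u : LTree T NS NA} (l : Lab T NS NA) (cs : List (LTree T NS NA)) :
      u ∈ cs → Subtree s u → Subtree s (.node l cs)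

/-- Substitution of the tree β (with root label `nonterm A`) for one
substitution leaf A↓. -/
inductive ReplaceSubst (β : LTree T NS NA) (A : NS) :
    LTree T NS NA → LTree T NS NA → Prop
  | here : rootLabel β = .nonterm A → ReplaceSubst β A (.node (.substLeaf A) []) β
  | step (l : Lab T NS NA) (pre post : List (LTree T NS NA)) {t t' : LTree T NS NA} :
      ReplaceSubst β A t t' →
      ReplaceSubst β A (.node l (pre ++ t :: post)) (.node l (pre ++ t' :: post))

/-- Replacement of the foot node n* by the tree `sub`. -/
inductive FootReplace (n : NA) (sub : LTree T NS NA) :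
    LTree T NS NA → LTree T NS NA → Prop
  | here : FootReplace n sub (.node (.foot n) []) sub
  | step (l : Lab T NS NA) (pre post : List (LTree T NS NA)) {t t' : LTree T NS NA} :
      FootReplace n sub t t' →
      FootReplace n sub (.node l (pre ++ t :: post)) (.node l (pre ++ t' :: post))

/-- Adjunction of the auxiliary(-derived) tree β (root `anode n`, with a foot
node n*) at one node marked (n): the marked node is replaced by β, and the
original subtree below the node is spliced in at the foot of β. -/
inductive Adjoin (β : LTree T NS NA) : LTree T NS NA → LTree T NS NA → Prop
  | here (n : NA) (cs : List (LTree T NS NA)) {β' : LTree T NS NA} :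
      rootLabel β = .anode n →
      FootReplace n (.node (.anode n) cs) β β' →
      Adjoin β (.node (.adj n) cs) β'
  | step (l : Lab T NS NA) (pre post : List (LTree T NS NA)) {t t' : LTree T NS NA} :
      Adjoin β t t' →
      Adjoin β (.node l (pre ++ t :: post)) (.node l (pre ++ t' :: post))

end LTree

/-- An LTAG₀ grammar: a start symbol, initial trees and auxiliary trees. -/
structure LTAG0 (T NS NA : Type) where
  start : NS
  initial : Set (LTree T NS NA)
  auxTrees : Set (LTree T NS NA)

namespace LTAG0

variable {T NS NA : Type} (g : LTAG0 T NS NA)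

/-- Well-formedness of an LTAG₀ grammar: finitely many elementary trees; every
elementary tree has exactly one terminal leaf; initial trees are rooted in
substitution nonterminals and have no foot node; every auxiliary tree is rooted
in an adjunction nonterminal and has exactly one foot node, labelled by the
same adjunction nonterminal as its root; and every adjunction node lies on the
path from the terminal leaf to the root (i.e. every subtree rooted at an
adjunction mark contains the terminal leaf). -/
def WellFormed : Prop :=
  g.initial.Finite ∧ g.auxTrees.Finite ∧
  (∀ t ∈ g.initial ∪ g.auxTrees, LTree.termCount t = 1) ∧
  (∀ t ∈ g.initial, (∃ A : NS, LTree.rootLabel t = .nonterm A) ∧ LTree.footCount t = 0) ∧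
  (∀ t ∈ g.auxTrees, ∃ n : NA, LTree.rootLabel t = .anode n ∧ LTree.footCount t = 1 ∧
      ∀ u, LTree.Subtree u t → ∀ m : NA, LTree.rootLabel u = .foot m → m = n) ∧
  (∀ t ∈ g.initial ∪ g.auxTrees, ∀ u, LTree.Subtree u t →
      (∃ n : NA, LTree.rootLabel u = .adj n) → 1 ≤ LTree.termCount u)

/-- Derived trees: elementary trees closed under substitution and adjunction. -/
inductive Derived : LTree T NS NA → Prop
  | init {t} : t ∈ g.initial → Derived t
  | auxMem {t} : t ∈ g.auxTrees → Derived t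
  | subst {t β t'} (A : NS) : Derived t → Derived β →
      LTree.ReplaceSubst β A t t' → Derived t'
  | adjoin {t β t'} : Derived t → Derived β →
      LTree.Adjoin β t t' → Derived t'

/-- The language generated by an LTAG₀ grammar: the yields of complete derived
trees rooted in the start symbol. -/
def language : Set (List T) :=
  {w | ∃ t, g.Derived t ∧ LTree.rootLabel t = .nonterm g.start ∧
        LTree.Complete t ∧ LTree.yield t = w}

end LTAG0


namespace CD
open LTree

abbrev Tm := Fin 4
abbrev NT := Fin 4
abbrev NB := Fin 2
abbrev Tr := LTree Tm NT NB

def ta : Tr := .node (.term 0) []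
def tb : Tr := .node (.term 1) []
def tc : Tr := .node (.term 2) []
def td : Tr := .node (.term 3) []
def lB : Tr := .node (.substLeaf 1) []
def lC : Tr := .node (.substLeaf 2) []
def lD : Tr := .node (.substLeaf 3) []
def trC : Tr := .node (.nonterm 2) [tc]
def trD : Tr := .node (.nonterm 3) [td]
def fQ : Tr := .node (.foot 0) []
def fR : Tr := .node (.foot 1) []

def αS : Tr := .node (.nonterm 0) [ta, lB, lD]
def αB : Tr := .node (.nonterm 1) [.node (.adj 0) [tb, lC]]
def βb : Tr := .node (.anode 0) [.node (.adj 0) [tb, fQ], lD]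
def βa1 : Tr := .node (.anode 0) [.node (.adj 1) [ta, .node (.anode 1) [fQ, lC]]]
def βa2 : Tr := .node (.anode 1) [.node (.adj 1) [ta, .node (.anode 1) [fR, lC]]]

def G : LTAG0 Tm NT NB := ⟨0, {αS, αB, trC, trD}, {βb, βa1, βa2}⟩

/-! ### families -/

def CF (γ : Tr) : Prop := γ = lC ∨ γ = trC
def DF (δ : Tr) : Prop := δ = lD ∨ δ = trD

inductive ACh : Tr → Tr → Prop
  | refl (s) : ACh s s
  | step {s u γ} : ACh s u → CF γ →
      ACh s (.node (.anode 1) [ta, .node (.anode 1) [u, γ]])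

inductive RW : Tr → Tr → Prop
  | mk {s u γ} : ACh s u → CF γ →
      RW s (.node (.adj 1) [ta, .node (.anode 1) [u, γ]])
  | wrap {s w} : RW s w → RW s (.node (.anode 1) [w])

inductive QT : Tr → Tr → Prop
  | qb0 {s δ} : DF δ → QT s (.node (.anode 0) [.node (.adj 0) [tb, s], δ])
  | qb1 {s g δ} : QT (.node (.anode 0) [tb, s]) g → DF δ →
      QT s (.node (.anode 0) [g, δ])
  | qa {s w} : RW s w → QT s (.node (.anode 0) [w])

def RT (s t : Tr) : Prop := ∃ w, RW s w ∧ t = .node (.anode 1) [w]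

def BT (t : Tr) : Prop :=
  (∃ γ, CF γ ∧ t = .node (.nonterm 1) [.node (.adj 0) [tb, γ]]) ∨
  (∃ g γ, CF γ ∧ QT (.node (.anode 0) [tb, γ]) g ∧ t = .node (.nonterm 1) [g])

def ST (t : Tr) : Prop :=
  ∃ β δ, (β = lB ∨ BT β) ∧ DF δ ∧ t = .node (.nonterm 0) [ta, β, δ]

def Inv (t : Tr) : Prop :=
  t = trC ∨ t = trD ∨ BT t ∨ ST t ∨ QT fQ t ∨ RT fR t

/-! ### list helpers -/

theorem list1 {α} {a : α} {pre post : List α} {x : α} (h : pre ++ x :: post = [a]) :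
    pre = [] ∧ x = a ∧ post = [] := by
  cases pre with
  | nil => simp_all
  | cons y ys => rcases ys <;> simp_all

theorem list2 {α} {a b : α} {pre post : List α} {x : α} (h : pre ++ x :: post = [a, b]) :
    (pre = [] ∧ x = a ∧ post = [b]) ∨ (pre = [a] ∧ x = b ∧ post = []) := by
  cases pre with
  | nil => simp_all
  | cons y ys =>
    cases ys with
    | nil => simp_all
    | cons z zs => rcases zs <;> simp_all

theorem list3 {α} {a b c : α} {pre post : List α} {x : α} (h : pre ++ x :: post = [a, b, c]) :
    (pre = [] ∧ x = a ∧ post = [b, c]) ∨ (pre = [a] ∧ x = b ∧ post = [c]) ∨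
    (pre = [a, b] ∧ x = c ∧ post = []) := by
  cases pre with
  | nil => simp_all
  | cons y ys =>
    cases ys with
    | nil => simp_all
    | cons z zs =>
      cases zs with
      | nil => simp_all
      | cons w ws => rcases ws <;> simp_all

/-! ### root label lemmas -/

theorem RW_root {s w} (h : RW s w) :
    rootLabel w = .adj 1 ∨ rootLabel w = .anode 1 := by
  cases h <;> simp [rootLabel]

theorem QT_root {s t} (h : QT s t) : rootLabel t = .anode 0 := by
  cases h <;> rfl

theorem RT_root {s t} (h : RT s t) : rootLabel t = .anode 1 := by
  obtain ⟨w, _, rfl⟩ := h; rfl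

theorem BT_root {t} (h : BT t) : rootLabel t = .nonterm 1 := by
  rcases h with ⟨γ, _, rfl⟩ | ⟨g, γ, _, _, rfl⟩ <;> rfl

theorem ST_root {t} (h : ST t) : rootLabel t = .nonterm 0 := by
  obtain ⟨β, δ, _, _, rfl⟩ := h; rfl

theorem inv_nonterm {t : Tr} (h : Inv t) {A : NT} (hr : rootLabel t = .nonterm A) :
    (A = 0 ∧ ST t) ∨ (A = 1 ∧ BT t) ∨ (A = 2 ∧ t = trC) ∨ (A = 3 ∧ t = trD) := by
  rcases h with rfl | rfl | h | h | h | h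
  · simp only [trC, rootLabel] at hr
    injection hr with h'; exact Or.inr (Or.inr (Or.inl ⟨h'.symm, rfl⟩))
  · simp only [trD, rootLabel] at hr
    injection hr with h'; exact Or.inr (Or.inr (Or.inr ⟨h'.symm, rfl⟩))
  · have := BT_root h; rw [hr] at this; injection this with h'
    exact Or.inr (Or.inl ⟨h', h⟩)
  · have := ST_root h; rw [hr] at this; injection this with h'
    exact Or.inl ⟨h', h⟩
  · have := QT_root h; rw [hr] at this; cases this
  · have := RT_root h; rw [hr] at this; cases this

theorem inv_anode {t : Tr} (h : Inv t) {n : NB} (hr : rootLabel t = .anode n) :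
    (n = 0 ∧ QT fQ t) ∨ (n = 1 ∧ RT fR t) := by
  rcases h with rfl | rfl | h | h | h | h
  · simp [trC, rootLabel] at hr
  · simp [trD, rootLabel] at hr
  · have := BT_root h; rw [hr] at this; cases this
  · have := ST_root h; rw [hr] at this; cases this
  · have := QT_root h; rw [hr] at this; injection this with h'
    exact Or.inl ⟨h', h⟩
  · have := RT_root h; rw [hr] at this; injection this with h'
    exact Or.inr ⟨h', h⟩

end CD

namespace CD
open LTree

theorem rs_root {β : Tr} {A t t'} (h : ReplaceSubst β A t t') :
    rootLabel β = .nonterm A := by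
  induction h with
  | here h => exact h
  | step l pre post h ih => exact ih

theorem adj_root {β : Tr} {t t'} (h : Adjoin β t t') :
    ∃ n, rootLabel β = .anode n := by
  induction h with
  | here n cs h hf => exact ⟨n, h⟩
  | step l pre post h ih => exact ih

/-- generic inversion for ReplaceSubst -/
theorem rs_cases {β : Tr} {A t t'} (h : ReplaceSubst β A t t') :
    (t = .node (.substLeaf A) [] ∧ t' = β ∧ rootLabel β = .nonterm A) ∨
    (∃ l pre x post x', t = .node l (pre ++ x :: post) ∧
      t' = .node l (pre ++ x' :: post) ∧ ReplaceSubst β A x x') := by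
  cases h with
  | here h => exact Or.inl ⟨rfl, rfl, h⟩
  | step l pre post h => exact Or.inr ⟨l, pre, _, post, _, rfl, rfl, h⟩

/-- generic inversion for FootReplace -/
theorem fr_cases {n : NB} {sub : Tr} {t t'} (h : FootReplace n sub t t') :
    (t = .node (.foot n) [] ∧ t' = sub) ∨
    (∃ l pre x post x', t = .node l (pre ++ x :: post) ∧
      t' = .node l (pre ++ x' :: post) ∧ FootReplace n sub x x') := by
  cases h with
  | here => exact Or.inl ⟨rfl, rfl⟩
  | step l pre post h => exact Or.inr ⟨l, pre, _, post, _, rfl, rfl, h⟩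

/-- generic inversion for Adjoin -/
theorem adj_cases {β : Tr} {t t'} (h : Adjoin β t t') :
    (∃ n cs, t = .node (.adj n) cs ∧ rootLabel β = .anode n ∧
      FootReplace n (.node (.anode n) cs) β t') ∨
    (∃ l pre x post x', t = .node l (pre ++ x :: post) ∧
      t' = .node l (pre ++ x' :: post) ∧ Adjoin β x x') := by
  cases h with
  | here n cs h hf => exact Or.inl ⟨n, cs, rfl, h, hf⟩
  | step l pre post h => exact Or.inr ⟨l, pre, _, post, _, rfl, rfl, h⟩

theorem rs_nil_inv {β : Tr} {A l t'} (h : ReplaceSubst β A (.node l []) t') :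
    l = .substLeaf A ∧ t' = β := by
  rcases rs_cases h with ⟨h1, rfl, _⟩ | ⟨l', pre, x, post, x', h1, _, _⟩
  · injection h1 with h1 h2; exact ⟨h1, rfl⟩
  · injection h1 with h1 h2; simp at h2

theorem rs_term {β : Tr} {A x t'} (h : ReplaceSubst β A (.node (.term x) []) t') : False := by
  have := rs_nil_inv h; simp_all

theorem rs_foot {β : Tr} {A n t'} (h : ReplaceSubst β A (.node (.foot n) []) t') : False := by
  have := rs_nil_inv h; simp_all
end CD

namespace CD
open LTree

theorem rs_trC {β : Tr} {A t'} (h : ReplaceSubst β A trC t') : False := by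
  rcases rs_cases h with ⟨h1, _, _⟩ | ⟨l, pre, x, post, x', h1, _, hx⟩
  · simp [trC] at h1
  · rw [trC] at h1; injection h1 with h1 h2
    obtain ⟨rfl, rfl, rfl⟩ := list1 h2.symm
    exact rs_term hx

theorem rs_trD {β : Tr} {A t'} (h : ReplaceSubst β A trD t') : False := by
  rcases rs_cases h with ⟨h1, _, _⟩ | ⟨l, pre, x, post, x', h1, _, hx⟩
  · simp [trD] at h1
  · rw [trD] at h1; injection h1 with h1 h2
    obtain ⟨rfl, rfl, rfl⟩ := list1 h2.symm
    exact rs_term hx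

theorem rs_CF {β : Tr} {A γ γ'} (hβ : Inv β) (h : ReplaceSubst β A γ γ') (hγ : CF γ) :
    CF γ' := by
  rcases hγ with rfl | rfl
  · obtain ⟨h1, rfl⟩ := rs_nil_inv h
    injection h1 with h1; subst h1
    rcases inv_nonterm hβ (rs_root h) with ⟨h2, _⟩ | ⟨h2, _⟩ | ⟨_, rfl⟩ | ⟨h2, _⟩
    · exact absurd h2 (by decide)
    · exact absurd h2 (by decide)
    · exact Or.inr rfl
    · exact absurd h2 (by decide)
  · exact absurd h rs_trC

theorem rs_DF {β : Tr} {A δ δ'} (hβ : Inv β) (h : ReplaceSubst β A δ δ') (hδ : DF δ) :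
    DF δ' := by
  rcases hδ with rfl | rfl
  · obtain ⟨h1, rfl⟩ := rs_nil_inv h
    injection h1 with h1; subst h1
    rcases inv_nonterm hβ (rs_root h) with ⟨h2, _⟩ | ⟨h2, _⟩ | ⟨h2, _⟩ | ⟨_, rfl⟩
    · exact absurd h2 (by decide)
    · exact absurd h2 (by decide)
    · exact absurd h2 (by decide)
    · exact Or.inr rfl
  · exact absurd h rs_trD

theorem rs_ACh {β : Tr} {A s u u'} (hβ : Inv β) (h : ACh s u)
    (hr : ReplaceSubst β A u u') :
    (∃ s', ReplaceSubst β A s s' ∧ ACh s' u') ∨ ACh s u' := by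
  induction h generalizing u' with
  | refl => exact Or.inl ⟨u', hr, ACh.refl u'⟩
  | step hc hγ ih =>
    rcases rs_cases hr with ⟨h1, _, _⟩ | ⟨l, pre, x, post, x', h1, rfl, hx⟩
    · simp at h1
    · injection h1 with h1 h2; subst h1
      rcases list2 h2.symm with ⟨rfl, rfl, rfl⟩ | ⟨rfl, rfl, rfl⟩
      · exact absurd hx rs_term
      · -- inner node [u, γ]
        rcases rs_cases hx with ⟨h3, _, _⟩ | ⟨l', pre', y, post', y', h3, rfl, hy⟩
        · simp at h3
        · injection h3 with h3 h4; subst h3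
          rcases list2 h4.symm with ⟨rfl, rfl, rfl⟩ | ⟨rfl, rfl, rfl⟩
          · rcases ih hy with ⟨s', hs, hc'⟩ | hc'
            · exact Or.inl ⟨s', hs, ACh.step hc' hγ⟩
            · exact Or.inr (ACh.step hc' hγ)
          · exact Or.inr (ACh.step hc (rs_CF hβ hy hγ))

theorem rs_RW {β : Tr} {A s w w'} (hβ : Inv β) (h : RW s w)
    (hr : ReplaceSubst β A w w') :
    (∃ s', ReplaceSubst β A s s' ∧ RW s' w') ∨ RW s w' := by
  induction h generalizing w' with
  | mk hc hγ =>
    rcases rs_cases hr with ⟨h1, _, _⟩ | ⟨l, pre, x, post, x', h1, rfl, hx⟩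
    · simp at h1
    · injection h1 with h1 h2; subst h1
      rcases list2 h2.symm with ⟨rfl, rfl, rfl⟩ | ⟨rfl, rfl, rfl⟩
      · exact absurd hx rs_term
      · rcases rs_cases hx with ⟨h3, _, _⟩ | ⟨l', pre', y, post', y', h3, rfl, hy⟩
        · simp at h3
        · injection h3 with h3 h4; subst h3
          rcases list2 h4.symm with ⟨rfl, rfl, rfl⟩ | ⟨rfl, rfl, rfl⟩
          · rcases rs_ACh hβ hc hy with ⟨s', hs, hc'⟩ | hc'
            · exact Or.inl ⟨s', hs, RW.mk hc' hγ⟩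
            · exact Or.inr (RW.mk hc' hγ)
          · exact Or.inr (RW.mk hc (rs_CF hβ hy hγ))
  | wrap h ih =>
    rcases rs_cases hr with ⟨h1, _, _⟩ | ⟨l, pre, x, post, x', h1, rfl, hx⟩
    · simp at h1
    · injection h1 with h1 h2; subst h1
      obtain ⟨rfl, rfl, rfl⟩ := list1 h2.symm
      rcases ih hx with ⟨s', hs, h'⟩ | h'
      · exact Or.inl ⟨s', hs, RW.wrap h'⟩
      · exact Or.inr (RW.wrap h')

theorem rs_QT {β : Tr} {A s t t'} (hβ : Inv β) (h : QT s t)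
    (hr : ReplaceSubst β A t t') :
    (∃ s', ReplaceSubst β A s s' ∧ QT s' t') ∨ QT s t' := by
  induction h generalizing t' with
  | qb0 hδ =>
    rcases rs_cases hr with ⟨h1, _, _⟩ | ⟨l, pre, x, post, x', h1, rfl, hx⟩
    · simp at h1
    · injection h1 with h1 h2; subst h1
      rcases list2 h2.symm with ⟨rfl, rfl, rfl⟩ | ⟨rfl, rfl, rfl⟩
      · -- into the mark node [tb, s]
        rcases rs_cases hx with ⟨h3, _, _⟩ | ⟨l', pre', y, post', y', h3, rfl, hy⟩
        · simp at h3
        · injection h3 with h3 h4; subst h3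
          rcases list2 h4.symm with ⟨rfl, rfl, rfl⟩ | ⟨rfl, rfl, rfl⟩
          · exact absurd hy rs_term
          · exact Or.inl ⟨y', hy, QT.qb0 hδ⟩
      · exact Or.inr (QT.qb0 (rs_DF hβ hx hδ))
  | qb1 hg hδ ih =>
    rcases rs_cases hr with ⟨h1, _, _⟩ | ⟨l, pre, x, post, x', h1, rfl, hx⟩
    · simp at h1
    · injection h1 with h1 h2; subst h1
      rcases list2 h2.symm with ⟨rfl, rfl, rfl⟩ | ⟨rfl, rfl, rfl⟩
      · rcases ih hx with ⟨p', hp, hg'⟩ | hg'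
        · -- substitution went into the plug [tb, s]
          rcases rs_cases hp with ⟨h3, _, _⟩ | ⟨l', pre', y, post', y', h3, rfl, hy⟩
          · simp at h3
          · injection h3 with h3 h4; subst h3
            rcases list2 h4.symm with ⟨rfl, rfl, rfl⟩ | ⟨rfl, rfl, rfl⟩
            · exact absurd hy rs_term
            · exact Or.inl ⟨y', hy, QT.qb1 hg' hδ⟩
        · exact Or.inr (QT.qb1 hg' hδ)
      · exact Or.inr (QT.qb1 hg (rs_DF hβ hx hδ))
  | qa hw =>
    rcases rs_cases hr with ⟨h1, _, _⟩ | ⟨l, pre, x, post, x', h1, rfl, hx⟩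
    · simp at h1
    · injection h1 with h1 h2; subst h1
      obtain ⟨rfl, rfl, rfl⟩ := list1 h2.symm
      rcases rs_RW hβ hw hx with ⟨s', hs, h'⟩ | h'
      · exact Or.inl ⟨s', hs, QT.qa h'⟩
      · exact Or.inr (QT.qa h')

theorem rs_BT {β : Tr} {A t t'} (hβ : Inv β) (h : BT t)
    (hr : ReplaceSubst β A t t') : BT t' := by
  rcases h with ⟨γ, hγ, rfl⟩ | ⟨g, γ, hγ, hg, rfl⟩
  · rcases rs_cases hr with ⟨h1, _, _⟩ | ⟨l, pre, x, post, x', h1, rfl, hx⟩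
    · simp at h1
    · injection h1 with h1 h2; subst h1
      obtain ⟨rfl, rfl, rfl⟩ := list1 h2.symm
      rcases rs_cases hx with ⟨h3, _, _⟩ | ⟨l', pre', y, post', y', h3, rfl, hy⟩
      · simp at h3
      · injection h3 with h3 h4; subst h3
        rcases list2 h4.symm with ⟨rfl, rfl, rfl⟩ | ⟨rfl, rfl, rfl⟩
        · exact absurd hy rs_term
        · exact Or.inl ⟨y', rs_CF hβ hy hγ, rfl⟩
  · rcases rs_cases hr with ⟨h1, _, _⟩ | ⟨l, pre, x, post, x', h1, rfl, hx⟩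
    · simp at h1
    · injection h1 with h1 h2; subst h1
      obtain ⟨rfl, rfl, rfl⟩ := list1 h2.symm
      rcases rs_QT hβ hg hx with ⟨p', hp, hg'⟩ | hg'
      · rcases rs_cases hp with ⟨h3, _, _⟩ | ⟨l', pre', y, post', y', h3, rfl, hy⟩
        · simp at h3
        · injection h3 with h3 h4; subst h3
          rcases list2 h4.symm with ⟨rfl, rfl, rfl⟩ | ⟨rfl, rfl, rfl⟩
          · exact absurd hy rs_term
          · exact Or.inr ⟨_, y', rs_CF hβ hy hγ, hg', rfl⟩
      · exact Or.inr ⟨_, γ, hγ, hg', rfl⟩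

theorem rs_ST {β : Tr} {A t t'} (hβ : Inv β) (h : ST t)
    (hr : ReplaceSubst β A t t') : ST t' := by
  obtain ⟨b, δ, hb, hδ, rfl⟩ := h
  rcases rs_cases hr with ⟨h1, _, _⟩ | ⟨l, pre, x, post, x', h1, rfl, hx⟩
  · simp at h1
  · injection h1 with h1 h2; subst h1
    rcases list3 h2.symm with ⟨rfl, rfl, rfl⟩ | ⟨rfl, rfl, rfl⟩ | ⟨rfl, rfl, rfl⟩
    · exact absurd hx rs_term
    · rcases hb with rfl | hb
      · obtain ⟨h3, rfl⟩ := rs_nil_inv hx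
        injection h3 with h3; subst h3
        rcases inv_nonterm hβ (rs_root hx) with ⟨h2, _⟩ | ⟨_, hbt⟩ | ⟨h2, _⟩ | ⟨h2, _⟩
        · exact absurd h2 (by decide)
        · exact ⟨_, δ, Or.inr hbt, hδ, rfl⟩
        · exact absurd h2 (by decide)
        · exact absurd h2 (by decide)
      · exact ⟨_, δ, Or.inr (rs_BT hβ hb hx), hδ, rfl⟩
    · exact ⟨b, x', hb, rs_DF hβ hx hδ, rfl⟩

end CD

namespace CD
open LTree

theorem fr_nil_inv {n : NB} {sub : Tr} {l t'} (h : FootReplace n sub (.node l []) t') :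
    l = .foot n ∧ t' = sub := by
  rcases fr_cases h with ⟨h1, rfl⟩ | ⟨l', pre, x, post, x', h1, _, _⟩
  · injection h1 with h1 h2; exact ⟨h1, rfl⟩
  · injection h1 with h1 h2; simp at h2

theorem fr_term {n : NB} {sub : Tr} {x t'} (h : FootReplace n sub (.node (.term x) []) t') :
    False := by have := fr_nil_inv h; simp_all

theorem fr_leaf {n : NB} {sub : Tr} {A t'} (h : FootReplace n sub (.node (.substLeaf A) []) t') :
    False := by have := fr_nil_inv h; simp_all

theorem fr_trC {n : NB} {sub : Tr} {t'} (h : FootReplace n sub trC t') : False := by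
  rcases fr_cases h with ⟨h1, _⟩ | ⟨l, pre, x, post, x', h1, _, hx⟩
  · simp [trC] at h1
  · rw [trC] at h1; injection h1 with h1 h2
    obtain ⟨rfl, rfl, rfl⟩ := list1 h2.symm
    exact fr_term hx

theorem fr_trD {n : NB} {sub : Tr} {t'} (h : FootReplace n sub trD t') : False := by
  rcases fr_cases h with ⟨h1, _⟩ | ⟨l, pre, x, post, x', h1, _, hx⟩
  · simp [trD] at h1
  · rw [trD] at h1; injection h1 with h1 h2
    obtain ⟨rfl, rfl, rfl⟩ := list1 h2.symm
    exact fr_term hx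

theorem fr_CF {n : NB} {sub : Tr} {γ t'} (hγ : CF γ) (h : FootReplace n sub γ t') :
    False := by
  rcases hγ with rfl | rfl
  · exact fr_leaf h
  · exact fr_trC h

theorem fr_DF {n : NB} {sub : Tr} {δ t'} (hδ : DF δ) (h : FootReplace n sub δ t') :
    False := by
  rcases hδ with rfl | rfl
  · exact fr_leaf h
  · exact fr_trD h

theorem fr_ACh {n : NB} {x : Tr} {s u u'} (h : ACh s u) (hf : FootReplace n x u u') :
    ∃ s', FootReplace n x s s' ∧ ACh s' u' := by
  induction h generalizing u' with
  | refl => exact ⟨u', hf, ACh.refl u'⟩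
  | step hc hγ ih =>
    rcases fr_cases hf with ⟨h1, _⟩ | ⟨l, pre, y, post, y', h1, rfl, hy⟩
    · simp at h1
    · injection h1 with h1 h2; subst h1
      rcases list2 h2.symm with ⟨rfl, rfl, rfl⟩ | ⟨rfl, rfl, rfl⟩
      · exact absurd hy fr_term
      · rcases fr_cases hy with ⟨h3, _⟩ | ⟨l', pre', z, post', z', h3, rfl, hz⟩
        · simp at h3
        · injection h3 with h3 h4; subst h3
          rcases list2 h4.symm with ⟨rfl, rfl, rfl⟩ | ⟨rfl, rfl, rfl⟩
          · obtain ⟨s', hs, hc'⟩ := ih hz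
            exact ⟨s', hs, ACh.step hc' hγ⟩
          · exact absurd hz (fr_CF hγ)

theorem fr_RW {n : NB} {x : Tr} {s w w'} (h : RW s w) (hf : FootReplace n x w w') :
    ∃ s', FootReplace n x s s' ∧ RW s' w' := by
  induction h generalizing w' with
  | mk hc hγ =>
    rcases fr_cases hf with ⟨h1, _⟩ | ⟨l, pre, y, post, y', h1, rfl, hy⟩
    · simp at h1
    · injection h1 with h1 h2; subst h1
      rcases list2 h2.symm with ⟨rfl, rfl, rfl⟩ | ⟨rfl, rfl, rfl⟩
      · exact absurd hy fr_term
      · rcases fr_cases hy with ⟨h3, _⟩ | ⟨l', pre', z, post', z', h3, rfl, hz⟩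
        · simp at h3
        · injection h3 with h3 h4; subst h3
          rcases list2 h4.symm with ⟨rfl, rfl, rfl⟩ | ⟨rfl, rfl, rfl⟩
          · obtain ⟨s', hs, hc'⟩ := fr_ACh hc hz
            exact ⟨s', hs, RW.mk hc' hγ⟩
          · exact absurd hz (fr_CF hγ)
  | wrap h ih =>
    rcases fr_cases hf with ⟨h1, _⟩ | ⟨l, pre, y, post, y', h1, rfl, hy⟩
    · simp at h1
    · injection h1 with h1 h2; subst h1
      obtain ⟨rfl, rfl, rfl⟩ := list1 h2.symm
      obtain ⟨s', hs, h'⟩ := ih hy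
      exact ⟨s', hs, RW.wrap h'⟩

theorem fr_QT {n : NB} {x : Tr} {s t t'} (h : QT s t) (hf : FootReplace n x t t') :
    ∃ s', FootReplace n x s s' ∧ QT s' t' := by
  induction h generalizing t' with
  | qb0 hδ =>
    rcases fr_cases hf with ⟨h1, _⟩ | ⟨l, pre, y, post, y', h1, rfl, hy⟩
    · simp at h1
    · injection h1 with h1 h2; subst h1
      rcases list2 h2.symm with ⟨rfl, rfl, rfl⟩ | ⟨rfl, rfl, rfl⟩
      · rcases fr_cases hy with ⟨h3, _⟩ | ⟨l', pre', z, post', z', h3, rfl, hz⟩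
        · simp at h3
        · injection h3 with h3 h4; subst h3
          rcases list2 h4.symm with ⟨rfl, rfl, rfl⟩ | ⟨rfl, rfl, rfl⟩
          · exact absurd hz fr_term
          · exact ⟨z', hz, QT.qb0 hδ⟩
      · exact absurd hy (fr_DF hδ)
  | qb1 hg hδ ih =>
    rcases fr_cases hf with ⟨h1, _⟩ | ⟨l, pre, y, post, y', h1, rfl, hy⟩
    · simp at h1
    · injection h1 with h1 h2; subst h1
      rcases list2 h2.symm with ⟨rfl, rfl, rfl⟩ | ⟨rfl, rfl, rfl⟩
      · obtain ⟨p', hp, hg'⟩ := ih hy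
        rcases fr_cases hp with ⟨h3, _⟩ | ⟨l', pre', z, post', z', h3, rfl, hz⟩
        · simp at h3
        · injection h3 with h3 h4; subst h3
          rcases list2 h4.symm with ⟨rfl, rfl, rfl⟩ | ⟨rfl, rfl, rfl⟩
          · exact absurd hz fr_term
          · exact ⟨z', hz, QT.qb1 hg' hδ⟩
      · exact absurd hy (fr_DF hδ)
  | qa hw =>
    rcases fr_cases hf with ⟨h1, _⟩ | ⟨l, pre, y, post, y', h1, rfl, hy⟩
    · simp at h1
    · injection h1 with h1 h2; subst h1
      obtain ⟨rfl, rfl, rfl⟩ := list1 h2.symm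
      obtain ⟨s', hs, h'⟩ := fr_RW hw hy
      exact ⟨s', hs, QT.qa h'⟩

theorem fr_fQ {n : NB} {x t'} (h : FootReplace n x fQ t') : n = 0 ∧ t' = x := by
  obtain ⟨h1, rfl⟩ := fr_nil_inv h
  injection h1 with h1; exact ⟨h1.symm, rfl⟩

theorem fr_fR {n : NB} {x t'} (h : FootReplace n x fR t') : n = 1 ∧ t' = x := by
  obtain ⟨h1, rfl⟩ := fr_nil_inv h
  injection h1 with h1; exact ⟨h1.symm, rfl⟩

theorem ACh_trans {s p u} (h1 : ACh s p) (h2 : ACh p u) : ACh s u := by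
  induction h2 with
  | refl => exact h1
  | step hc hγ ih => exact ACh.step ih hγ

theorem RW_mono {s p w} (h1 : ACh s p) (h2 : RW p w) : RW s w := by
  induction h2 with
  | mk hc hγ => exact RW.mk (ACh_trans h1 hc) hγ
  | wrap h ih => exact RW.wrap ih

end CD

namespace CD
open LTree

theorem adj_term {β : Tr} {x t'} (h : Adjoin β (.node (.term x) []) t') : False := by
  rcases adj_cases h with ⟨n, cs, h1, _, _⟩ | ⟨l, pre, y, post, y', h1, _, _⟩
  · injection h1 with h1 h2; simp at h1
  · injection h1 with h1 h2; simp at h2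

theorem adj_leaf {β : Tr} {A t'} (h : Adjoin β (.node (.substLeaf A) []) t') : False := by
  rcases adj_cases h with ⟨n, cs, h1, _, _⟩ | ⟨l, pre, y, post, y', h1, _, _⟩
  · injection h1 with h1 h2; simp at h1
  · injection h1 with h1 h2; simp at h2

theorem adj_foot {β : Tr} {m : NB} {t'} (h : Adjoin β (.node (.foot m) []) t') : False := by
  rcases adj_cases h with ⟨n, cs, h1, _, _⟩ | ⟨l, pre, y, post, y', h1, _, _⟩
  · injection h1 with h1 h2; simp at h1
  · injection h1 with h1 h2; simp at h2

theorem adj_trC {β : Tr} {t'} (h : Adjoin β trC t') : False := by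
  rcases adj_cases h with ⟨n, cs, h1, _, _⟩ | ⟨l, pre, y, post, y', h1, _, hy⟩
  · rw [trC] at h1; injection h1 with h1; simp at h1
  · rw [trC] at h1; injection h1 with h1 h2
    obtain ⟨rfl, rfl, rfl⟩ := list1 h2.symm
    exact adj_term hy

theorem adj_trD {β : Tr} {t'} (h : Adjoin β trD t') : False := by
  rcases adj_cases h with ⟨n, cs, h1, _, _⟩ | ⟨l, pre, y, post, y', h1, _, hy⟩
  · rw [trD] at h1; injection h1 with h1; simp at h1
  · rw [trD] at h1; injection h1 with h1 h2
    obtain ⟨rfl, rfl, rfl⟩ := list1 h2.symm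
    exact adj_term hy

theorem adj_CF {β : Tr} {γ t'} (hγ : CF γ) (h : Adjoin β γ t') : False := by
  rcases hγ with rfl | rfl
  · exact adj_leaf h
  · exact adj_trC h

theorem adj_DF {β : Tr} {δ t'} (hδ : DF δ) (h : Adjoin β δ t') : False := by
  rcases hδ with rfl | rfl
  · exact adj_leaf h
  · exact adj_trD h

theorem adj_ACh {β : Tr} {s u u'} (h : ACh s u) (ha : Adjoin β u u') :
    ∃ s', Adjoin β s s' ∧ ACh s' u' := by
  induction h generalizing u' with
  | refl => exact ⟨u', ha, ACh.refl u'⟩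
  | step hc hγ ih =>
    rcases adj_cases ha with ⟨n, cs, h1, _, _⟩ | ⟨l, pre, y, post, y', h1, rfl, hy⟩
    · injection h1 with h1; simp at h1
    · injection h1 with h1 h2; subst h1
      rcases list2 h2.symm with ⟨rfl, rfl, rfl⟩ | ⟨rfl, rfl, rfl⟩
      · exact absurd hy adj_term
      · rcases adj_cases hy with ⟨n, cs, h3, _, _⟩ | ⟨l', pre', z, post', z', h3, rfl, hz⟩
        · injection h3 with h3; simp at h3
        · injection h3 with h3 h4; subst h3
          rcases list2 h4.symm with ⟨rfl, rfl, rfl⟩ | ⟨rfl, rfl, rfl⟩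
          · obtain ⟨s', hs, hc'⟩ := ih hz
            exact ⟨s', hs, ACh.step hc' hγ⟩
          · exact absurd hz (adj_CF hγ)

theorem adj_RW {β : Tr} {s w w'} (hβ : Inv β) (h : RW s w) (ha : Adjoin β w w') :
    (∃ s', Adjoin β s s' ∧ RW s' w') ∨ RW s w' := by
  induction h generalizing w' with
  | mk hc hγ =>
    rcases adj_cases ha with ⟨n, cs, h1, hroot, hf⟩ | ⟨l, pre, y, post, y', h1, rfl, hy⟩
    · injection h1 with h1 h2; injection h1 with h1
      subst h1 h2
      rcases inv_anode hβ hroot with ⟨h2, _⟩ | ⟨_, hrt⟩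
      · exact absurd h2 (by decide)
      · obtain ⟨wβ, hwβ, rfl⟩ := hrt
        rcases fr_cases hf with ⟨h3, _⟩ | ⟨l', pre', z, post', z', h3, rfl, hz⟩
        · simp at h3
        · injection h3 with h3 h4; subst h3
          obtain ⟨rfl, rfl, rfl⟩ := list1 h4.symm
          obtain ⟨s2, hs2, hrw⟩ := fr_RW hwβ hz
          obtain ⟨_, rfl⟩ := fr_fR hs2
          exact Or.inr (RW.wrap (RW_mono (ACh.step hc hγ) hrw))
    · injection h1 with h1 h2; subst h1
      rcases list2 h2.symm with ⟨rfl, rfl, rfl⟩ | ⟨rfl, rfl, rfl⟩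
      · exact absurd hy adj_term
      · rcases adj_cases hy with ⟨n, cs, h3, _, _⟩ | ⟨l', pre', z, post', z', h3, rfl, hz⟩
        · injection h3 with h3; simp at h3
        · injection h3 with h3 h4; subst h3
          rcases list2 h4.symm with ⟨rfl, rfl, rfl⟩ | ⟨rfl, rfl, rfl⟩
          · obtain ⟨s', hs, hc'⟩ := adj_ACh hc hz
            exact Or.inl ⟨s', hs, RW.mk hc' hγ⟩
          · exact absurd hz (adj_CF hγ)
  | wrap h ih =>
    rcases adj_cases ha with ⟨n, cs, h1, _, _⟩ | ⟨l, pre, y, post, y', h1, rfl, hy⟩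
    · injection h1 with h1; simp at h1
    · injection h1 with h1 h2; subst h1
      obtain ⟨rfl, rfl, rfl⟩ := list1 h2.symm
      rcases ih hy with ⟨s', hs, h'⟩ | h'
      · exact Or.inl ⟨s', hs, RW.wrap h'⟩
      · exact Or.inr (RW.wrap h')

theorem adj_QT {β : Tr} {s t t'} (hβ : Inv β) (h : QT s t) (ha : Adjoin β t t') :
    (∃ s', Adjoin β s s' ∧ QT s' t') ∨ QT s t' := by
  induction h generalizing t' with
  | qb0 hδ =>
    rcases adj_cases ha with ⟨n, cs, h1, _, _⟩ | ⟨l, pre, y, post, y', h1, rfl, hy⟩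
    · injection h1 with h1; simp at h1
    · injection h1 with h1 h2; subst h1
      rcases list2 h2.symm with ⟨rfl, rfl, rfl⟩ | ⟨rfl, rfl, rfl⟩
      · -- at the mark node [tb, s]
        rcases adj_cases hy with ⟨n, cs, h3, hroot, hf⟩ | ⟨l', pre', z, post', z', h3, rfl, hz⟩
        · injection h3 with h3 h4; injection h3 with h3
          subst h3 h4
          rcases inv_anode hβ hroot with ⟨_, hqt⟩ | ⟨h2, _⟩
          · obtain ⟨s2, hs2, hqt'⟩ := fr_QT hqt hf
            obtain ⟨_, rfl⟩ := fr_fQ hs2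
            exact Or.inr (QT.qb1 hqt' hδ)
          · exact absurd h2 (by decide)
        · injection h3 with h3 h4; subst h3
          rcases list2 h4.symm with ⟨rfl, rfl, rfl⟩ | ⟨rfl, rfl, rfl⟩
          · exact absurd hz adj_term
          · exact Or.inl ⟨z', hz, QT.qb0 hδ⟩
      · exact absurd hy (adj_DF hδ)
  | qb1 hg hδ ih =>
    rcases adj_cases ha with ⟨n, cs, h1, _, _⟩ | ⟨l, pre, y, post, y', h1, rfl, hy⟩
    · injection h1 with h1; simp at h1
    · injection h1 with h1 h2; subst h1
      rcases list2 h2.symm with ⟨rfl, rfl, rfl⟩ | ⟨rfl, rfl, rfl⟩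
      · rcases ih hy with ⟨p', hp, hg'⟩ | hg'
        · rcases adj_cases hp with ⟨n, cs, h3, _, _⟩ | ⟨l', pre', z, post', z', h3, rfl, hz⟩
          · injection h3 with h3; simp at h3
          · injection h3 with h3 h4; subst h3
            rcases list2 h4.symm with ⟨rfl, rfl, rfl⟩ | ⟨rfl, rfl, rfl⟩
            · exact absurd hz adj_term
            · exact Or.inl ⟨z', hz, QT.qb1 hg' hδ⟩
        · exact Or.inr (QT.qb1 hg' hδ)
      · exact absurd hy (adj_DF hδ)
  | qa hw =>
    rcases adj_cases ha with ⟨n, cs, h1, _, _⟩ | ⟨l, pre, y, post, y', h1, rfl, hy⟩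
    · injection h1 with h1; simp at h1
    · injection h1 with h1 h2; subst h1
      obtain ⟨rfl, rfl, rfl⟩ := list1 h2.symm
      rcases adj_RW hβ hw hy with ⟨s', hs, h'⟩ | h'
      · exact Or.inl ⟨s', hs, QT.qa h'⟩
      · exact Or.inr (QT.qa h')

theorem adj_BT {β : Tr} {t t'} (hβ : Inv β) (h : BT t) (ha : Adjoin β t t') : BT t' := by
  rcases h with ⟨γ, hγ, rfl⟩ | ⟨g, γ, hγ, hg, rfl⟩
  · rcases adj_cases ha with ⟨n, cs, h1, _, _⟩ | ⟨l, pre, y, post, y', h1, rfl, hy⟩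
    · injection h1 with h1; simp at h1
    · injection h1 with h1 h2; subst h1
      obtain ⟨rfl, rfl, rfl⟩ := list1 h2.symm
      rcases adj_cases hy with ⟨n, cs, h3, hroot, hf⟩ | ⟨l', pre', z, post', z', h3, rfl, hz⟩
      · injection h3 with h3 h4; injection h3 with h3
        subst h3 h4
        rcases inv_anode hβ hroot with ⟨_, hqt⟩ | ⟨h2, _⟩
        · obtain ⟨s2, hs2, hqt'⟩ := fr_QT hqt hf
          obtain ⟨_, rfl⟩ := fr_fQ hs2
          exact Or.inr ⟨_, γ, hγ, hqt', rfl⟩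
        · exact absurd h2 (by decide)
      · injection h3 with h3 h4; subst h3
        rcases list2 h4.symm with ⟨rfl, rfl, rfl⟩ | ⟨rfl, rfl, rfl⟩
        · exact absurd hz adj_term
        · exact absurd hz (adj_CF hγ)
  · rcases adj_cases ha with ⟨n, cs, h1, _, _⟩ | ⟨l, pre, y, post, y', h1, rfl, hy⟩
    · injection h1 with h1; simp at h1
    · injection h1 with h1 h2; subst h1
      obtain ⟨rfl, rfl, rfl⟩ := list1 h2.symm
      rcases adj_QT hβ hg hy with ⟨p', hp, hg'⟩ | hg'
      · rcases adj_cases hp with ⟨n, cs, h3, _, _⟩ | ⟨l', pre', z, post', z', h3, rfl, hz⟩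
        · injection h3 with h3; simp at h3
        · injection h3 with h3 h4; subst h3
          rcases list2 h4.symm with ⟨rfl, rfl, rfl⟩ | ⟨rfl, rfl, rfl⟩
          · exact absurd hz adj_term
          · exact absurd hz (adj_CF hγ)
      · exact Or.inr ⟨_, γ, hγ, hg', rfl⟩

theorem adj_ST {β : Tr} {t t'} (hβ : Inv β) (h : ST t) (ha : Adjoin β t t') : ST t' := by
  obtain ⟨b, δ, hb, hδ, rfl⟩ := h
  rcases adj_cases ha with ⟨n, cs, h1, _, _⟩ | ⟨l, pre, y, post, y', h1, rfl, hy⟩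
  · injection h1 with h1; simp at h1
  · injection h1 with h1 h2; subst h1
    rcases list3 h2.symm with ⟨rfl, rfl, rfl⟩ | ⟨rfl, rfl, rfl⟩ | ⟨rfl, rfl, rfl⟩
    · exact absurd hy adj_term
    · rcases hb with rfl | hb
      · exact absurd hy adj_leaf
      · exact ⟨_, δ, Or.inr (adj_BT hβ hb hy), hδ, rfl⟩
    · exact absurd hy (adj_DF hδ)

theorem adj_fQ {β : Tr} {t'} (h : Adjoin β fQ t') : False := adj_foot h
theorem adj_fR {β : Tr} {t'} (h : Adjoin β fR t') : False := adj_foot h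
theorem rs_fQ {β : Tr} {A t'} (h : ReplaceSubst β A fQ t') : False := rs_foot h
theorem rs_fR {β : Tr} {A t'} (h : ReplaceSubst β A fR t') : False := rs_foot h

/-- The main invariant theorem. -/
theorem derived_inv {t : Tr} (h : LTAG0.Derived G t) : Inv t := by
  induction h with
  | init hmem =>
    simp only [G, Set.mem_insert_iff, Set.mem_singleton_iff] at hmem
    rcases hmem with rfl | rfl | rfl | rfl
    · exact Or.inr (Or.inr (Or.inr (Or.inl ⟨lB, lD, Or.inl rfl, Or.inl rfl, rfl⟩)))
    · exact Or.inr (Or.inr (Or.inl (Or.inl ⟨lC, Or.inl rfl, rfl⟩)))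
    · exact Or.inl rfl
    · exact Or.inr (Or.inl rfl)
  | auxMem hmem =>
    simp only [G, Set.mem_insert_iff, Set.mem_singleton_iff] at hmem
    rcases hmem with rfl | rfl | rfl
    · exact Or.inr (Or.inr (Or.inr (Or.inr (Or.inl (QT.qb0 (Or.inl rfl))))))
    · exact Or.inr (Or.inr (Or.inr (Or.inr (Or.inl
        (QT.qa (RW.mk (ACh.refl fQ) (Or.inl rfl)))))))
    · exact Or.inr (Or.inr (Or.inr (Or.inr (Or.inr
        ⟨_, RW.mk (ACh.refl fR) (Or.inl rfl), rfl⟩))))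
  | subst A hd hdβ hr iht ihβ =>
    rcases iht with rfl | rfl | hbt | hst | hqt | hrt
    · exact absurd hr rs_trC
    · exact absurd hr rs_trD
    · exact Or.inr (Or.inr (Or.inl (rs_BT ihβ hbt hr)))
    · exact Or.inr (Or.inr (Or.inr (Or.inl (rs_ST ihβ hst hr))))
    · rcases rs_QT ihβ hqt hr with ⟨s', hs, _⟩ | h'
      · exact absurd hs rs_fQ
      · exact Or.inr (Or.inr (Or.inr (Or.inr (Or.inl h'))))
    · obtain ⟨w, hw, rfl⟩ := hrt
      rcases rs_cases hr with ⟨h1, _, _⟩ | ⟨l, pre, x, post, x', h1, rfl, hx⟩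
      · simp at h1
      · injection h1 with h1 h2; subst h1
        obtain ⟨rfl, rfl, rfl⟩ := list1 h2.symm
        rcases rs_RW ihβ hw hx with ⟨s', hs, _⟩ | h'
        · exact absurd hs rs_fR
        · exact Or.inr (Or.inr (Or.inr (Or.inr (Or.inr ⟨_, h', rfl⟩))))
  | adjoin hd hdβ ha iht ihβ =>
    rcases iht with rfl | rfl | hbt | hst | hqt | hrt
    · exact absurd ha adj_trC
    · exact absurd ha adj_trD
    · exact Or.inr (Or.inr (Or.inl (adj_BT ihβ hbt ha)))
    · exact Or.inr (Or.inr (Or.inr (Or.inl (adj_ST ihβ hst ha))))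
    · rcases adj_QT ihβ hqt ha with ⟨s', hs, _⟩ | h'
      · exact absurd hs adj_fQ
      · exact Or.inr (Or.inr (Or.inr (Or.inr (Or.inl h'))))
    · obtain ⟨w, hw, rfl⟩ := hrt
      rcases adj_cases ha with ⟨n, cs, h1, _, _⟩ | ⟨l, pre, x, post, x', h1, rfl, hx⟩
      · injection h1 with h1; simp at h1
      · injection h1 with h1 h2; subst h1
        obtain ⟨rfl, rfl, rfl⟩ := list1 h2.symm
        rcases adj_RW ihβ hw hx with ⟨s', hs, _⟩ | h'
        · exact absurd hs adj_fR
        · exact Or.inr (Or.inr (Or.inr (Or.inr (Or.inr ⟨_, h', rfl⟩))))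

end CD

namespace CD
open LTree

@[simp] theorem yield_term (x : Tm) (cs) : yield (.node (.term x) cs : Tr) = [x] := by
  simp [yield]
@[simp] theorem yield_nonterm (A : NT) (cs) : yield (.node (.nonterm A) cs : Tr) = yields cs := by
  simp [yield]
@[simp] theorem yield_anode (n : NB) (cs) : yield (.node (.anode n) cs : Tr) = yields cs := by
  simp [yield]
@[simp] theorem yield_adj (n : NB) (cs) : yield (.node (.adj n) cs : Tr) = yields cs := by
  simp [yield]
@[simp] theorem yield_subst (A : NT) (cs) : yield (.node (.substLeaf A) cs : Tr) = yields cs := by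
  simp [yield]
@[simp] theorem yield_foot (n : NB) (cs) : yield (.node (.foot n) cs : Tr) = yields cs := by
  simp [yield]
@[simp] theorem yields_nil : yields ([] : List Tr) = [] := by simp [yields]
@[simp] theorem yields_cons (t : Tr) (ts) : yields (t :: ts) = yield t ++ yields ts := by
  simp [yields]

@[simp] theorem complete_anode (n : NB) (cs) :
    Complete (.node (.anode n) cs : Tr) = (cs ≠ [] ∧ CompleteList cs) := by simp [Complete]
@[simp] theorem complete_adj (n : NB) (cs) :
    Complete (.node (.adj n) cs : Tr) = (cs ≠ [] ∧ CompleteList cs) := by simp [Complete]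
@[simp] theorem complete_nonterm (A : NT) (cs) :
    Complete (.node (.nonterm A) cs : Tr) = (cs ≠ [] ∧ CompleteList cs) := by simp [Complete]
@[simp] theorem complete_term (x : Tm) (cs) :
    Complete (.node (.term x) cs : Tr) = (cs = []) := by simp [Complete]
@[simp] theorem complete_subst (A : NT) (cs) :
    Complete (.node (.substLeaf A) cs : Tr) = False := by simp [Complete]
@[simp] theorem complete_foot (n : NB) (cs) :
    Complete (.node (.foot n) cs : Tr) = False := by simp [Complete]
@[simp] theorem completeList_nil : CompleteList ([] : List Tr) = True := by simp [CompleteList]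
@[simp] theorem completeList_cons (t : Tr) (ts) :
    CompleteList (t :: ts) = (Complete t ∧ CompleteList ts) := by simp [CompleteList]

@[simp] theorem yield_ta : yield ta = [0] := by rw [ta]; simp
@[simp] theorem yield_tb : yield tb = [1] := by rw [tb]; simp
@[simp] theorem yield_tc : yield tc = [2] := by rw [tc]; simp
@[simp] theorem yield_td : yield td = [3] := by rw [td]; simp
@[simp] theorem yield_trC : yield trC = [2] := by rw [trC]; simp
@[simp] theorem yield_trD : yield trD = [3] := by rw [trD]; simp
@[simp] theorem complete_ta : Complete ta := by rw [ta]; simp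
@[simp] theorem complete_tb : Complete tb := by rw [tb]; simp
@[simp] theorem complete_tc : Complete tc := by rw [tc]; simp
@[simp] theorem complete_td : Complete td := by rw [td]; simp
@[simp] theorem complete_trC : Complete trC := by rw [trC]; simp
@[simp] theorem complete_trD : Complete trD := by rw [trD]; simp
@[simp] theorem not_complete_lB : ¬ Complete lB := by rw [lB]; simp
@[simp] theorem not_complete_lC : ¬ Complete lC := by rw [lC]; simp
@[simp] theorem not_complete_lD : ¬ Complete lD := by rw [lD]; simp

end CD
namespace CD
open LTree
@[simp] theorem rep_cons {x : Tm} {n : ℕ} {l : List Tm} :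
    List.replicate n x ++ x :: l = x :: (List.replicate n x ++ l) := by
  induction n with
  | zero => simp
  | succ n ih => simp [List.replicate_succ, ih]
end CD

namespace CD
open LTree

theorem CF_complete {γ : Tr} (h : CF γ) (hc : Complete γ) : γ = trC := by
  rcases h with rfl | rfl
  · exact absurd hc not_complete_lC
  · rfl

theorem DF_complete {δ : Tr} (h : DF δ) (hc : Complete δ) : δ = trD := by
  rcases h with rfl | rfl
  · exact absurd hc not_complete_lD
  · rfl

theorem y_ACh {s u} (h : ACh s u) (hc : Complete u) :
    Complete s ∧ ∃ k, yield u = List.replicate k 0 ++ yield s ++ List.replicate k 2 := by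
  induction h with
  | refl => exact ⟨hc, 0, by simp⟩
  | step hch hγ ih =>
    simp only [complete_anode, completeList_cons, completeList_nil] at hc
    obtain ⟨-, -, ⟨-, hcu, hcγ, -⟩, -⟩ := hc
    obtain ⟨hs, k, hy⟩ := ih hcu
    have hγ' := CF_complete hγ hcγ
    subst hγ'
    refine ⟨hs, k+1, ?_⟩
    simp [hy, List.replicate_succ, List.append_assoc]

theorem y_RW {s w} (h : RW s w) (hc : Complete w) :
    Complete s ∧ ∃ k, 1 ≤ k ∧
      yield w = List.replicate k 0 ++ yield s ++ List.replicate k 2 := by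
  induction h with
  | mk hch hγ =>
    simp only [complete_adj, completeList_cons, completeList_nil] at hc
    obtain ⟨-, -, ⟨-, hcu, hcγ, -⟩, -⟩ := hc
    obtain ⟨hs, k, hy⟩ := y_ACh hch hcu
    have hγ' := CF_complete hγ hcγ
    subst hγ'
    refine ⟨hs, k+1, by omega, ?_⟩
    simp [hy, List.replicate_succ, List.append_assoc]
  | wrap hw ih =>
    simp only [complete_anode, completeList_cons, completeList_nil] at hc
    obtain ⟨-, hcw, -⟩ := hc
    obtain ⟨hs, k, hk, hy⟩ := ih hcw
    exact ⟨hs, k, hk, by simp [hy]⟩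

theorem y_QT {s t} (h : QT s t) (hc : Complete t) :
    Complete s ∧ ∃ k i, yield t = List.replicate k 0 ++ List.replicate i 1 ++ yield s ++
      List.replicate k 2 ++ List.replicate i 3 := by
  induction h with
  | qb0 hδ =>
    simp only [complete_anode, complete_adj, completeList_cons, completeList_nil] at hc
    obtain ⟨-, ⟨-, -, hcs, -⟩, hcδ, -⟩ := hc
    have hδ' := DF_complete hδ hcδ
    subst hδ'
    exact ⟨hcs, 0, 1, by simp [List.append_assoc]⟩
  | qb1 hg hδ ih =>
    simp only [complete_anode, completeList_cons, completeList_nil] at hc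
    obtain ⟨-, hcg, hcδ, -⟩ := hc
    obtain ⟨hcplug, k, i, hy⟩ := ih hcg
    simp only [complete_anode, completeList_cons, completeList_nil] at hcplug
    obtain ⟨-, -, hcs, -⟩ := hcplug
    have hδ' := DF_complete hδ hcδ
    subst hδ'
    refine ⟨hcs, k, i+1, ?_⟩
    simp only [yield_anode, yields_cons, yields_nil] at hy ⊢
    rw [hy]
    simp [List.replicate_succ, List.append_assoc]
  | qa hw =>
    simp only [complete_anode, completeList_cons, completeList_nil] at hc
    obtain ⟨-, hcw, -⟩ := hc
    obtain ⟨hs, k, hk, hy⟩ := y_RW hw hcw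
    exact ⟨hs, k, 0, by simp [hy]⟩

theorem y_BT {t} (h : BT t) (hc : Complete t) :
    ∃ k i, yield t = List.replicate k 0 ++ List.replicate (i+1) 1 ++
      List.replicate (k+1) 2 ++ List.replicate i 3 := by
  rcases h with ⟨γ, hγ, rfl⟩ | ⟨g, γ, hγ, hg, rfl⟩
  · simp only [complete_nonterm, complete_adj, completeList_cons, completeList_nil] at hc
    obtain ⟨-, ⟨-, -, hcγ, -⟩, -⟩ := hc
    have hγ' := CF_complete hγ hcγ
    subst hγ'
    exact ⟨0, 0, by simp⟩
  · simp only [complete_nonterm, completeList_cons, completeList_nil] at hc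
    obtain ⟨-, hcg, -⟩ := hc
    obtain ⟨hcplug, k, i, hy⟩ := y_QT hg hcg
    have hγ' := CF_complete hγ (by
      simp only [complete_anode, completeList_cons, completeList_nil] at hcplug
      exact hcplug.2.2.1)
    subst hγ'
    refine ⟨k, i, ?_⟩
    simp only [yield_nonterm, yields_cons, yields_nil] at hy ⊢
    rw [hy]
    simp [List.replicate_succ, List.append_assoc]

theorem y_ST {t} (h : ST t) (hc : Complete t) :
    ∃ n m, 1 ≤ n ∧ 1 ≤ m ∧ yield t = List.replicate n 0 ++ List.replicate m 1 ++
      List.replicate n 2 ++ List.replicate m 3 := by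
  obtain ⟨b, δ, hb, hδ, rfl⟩ := h
  simp only [complete_nonterm, completeList_cons, completeList_nil] at hc
  obtain ⟨-, -, hcb, hcδ, -⟩ := hc
  have hδ' := DF_complete hδ hcδ
  subst hδ'
  rcases hb with rfl | hb
  · exact absurd hcb not_complete_lB
  · obtain ⟨k, i, hy⟩ := y_BT hb hcb
    refine ⟨k+1, i+1, by omega, by omega, ?_⟩
    simp only [yield_nonterm, yields_cons, yields_nil] at hy ⊢
    rw [hy]
    simp [List.replicate_succ, List.append_assoc]

end CD

namespace CD
open LTree

def markQ (s : Tr) : Tr := .node (.adj 0) [tb, s]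
def pch : ℕ → Tr
  | 0 => trC
  | j+1 => .node (.anode 0) [tb, pch j]
def stk : ℕ → Tr → Tr
  | 0, t => t
  | j+1, t => .node (.anode 0) [stk j t, trD]
def A2 (u : Tr) : Tr := .node (.adj 1) [ta, .node (.anode 1) [u, trC]]
def ach : ℕ → Tr → Tr
  | 0, u => u
  | k+1, u => .node (.anode 1) [ta, .node (.anode 1) [ach k u, trC]]
def lyj : ℕ → Tr → Tr
  | 0, x => x
  | j+1, x => .node (.anode 1) [lyj j x]

def βb' : Tr := .node (.anode 0) [markQ fQ, trD]
def βa1' : Tr := .node (.anode 0) [.node (.adj 1) [ta, .node (.anode 1) [fQ, trC]]]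
def βa2' : Tr := .node (.anode 1) [.node (.adj 1) [ta, .node (.anode 1) [fR, trC]]]

def btree (m : ℕ) : Tr := .node (.nonterm 1) [stk m (markQ (pch m))]
def apart (k i : ℕ) : Tr := .node (.anode 0) [lyj k (A2 (ach k (pch (i+1))))]

def sfull : ℕ → ℕ → Tr
  | 0, i => .node (.nonterm 0) [ta, btree i, trD]
  | k+1, i => .node (.nonterm 0) [ta, .node (.nonterm 1) [stk i (apart k i)], trD]

/- derivedness of the filled elementary trees -/

theorem derived_trC : LTAG0.Derived G trC := LTAG0.Derived.init (by simp [G])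
theorem derived_trD : LTAG0.Derived G trD := LTAG0.Derived.init (by simp [G])

theorem derived_βb' : LTAG0.Derived G βb' := by
  refine LTAG0.Derived.subst 3 (LTAG0.Derived.auxMem (t := βb) (by simp [G])) derived_trD ?_
  exact ReplaceSubst.step _ [markQ fQ] [] (ReplaceSubst.here rfl)

theorem derived_βa1' : LTAG0.Derived G βa1' := by
  refine LTAG0.Derived.subst 2 (LTAG0.Derived.auxMem (t := βa1) (by simp [G])) derived_trC ?_
  exact ReplaceSubst.step _ [] []
    (ReplaceSubst.step _ [ta] [] (ReplaceSubst.step _ [fQ] [] (ReplaceSubst.here rfl)))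

theorem derived_βa2' : LTAG0.Derived G βa2' := by
  refine LTAG0.Derived.subst 2 (LTAG0.Derived.auxMem (t := βa2) (by simp [G])) derived_trC ?_
  exact ReplaceSubst.step _ [] []
    (ReplaceSubst.step _ [ta] [] (ReplaceSubst.step _ [fR] [] (ReplaceSubst.here rfl)))

/- adjunction witnesses -/

theorem adjoin_b (s : Tr) :
    Adjoin βb' (markQ s) (.node (.anode 0) [markQ (.node (.anode 0) [tb, s]), trD]) := by
  refine Adjoin.here 0 [tb, s] rfl ?_
  exact FootReplace.step _ [] [trD] (FootReplace.step _ [tb] [] FootReplace.here)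

theorem adjoin_a1 (s : Tr) :
    Adjoin βa1' (markQ s) (.node (.anode 0) [A2 (.node (.anode 0) [tb, s])]) := by
  refine Adjoin.here 0 [tb, s] rfl ?_
  exact FootReplace.step _ [] []
    (FootReplace.step _ [ta] [] (FootReplace.step _ [] [trC] FootReplace.here))

theorem adjoin_a2 (u : Tr) :
    Adjoin βa2' (A2 u) (.node (.anode 1) [A2 (.node (.anode 1) [ta, .node (.anode 1) [u, trC]])]) := by
  refine Adjoin.here 1 [ta, .node (.anode 1) [u, trC]] rfl ?_
  exact FootReplace.step _ [] []
    (FootReplace.step _ [ta] [] (FootReplace.step _ [] [trC] FootReplace.here))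

theorem adj_child1 {β t t' : Tr} (l : Lab Tm NT NB) (h : Adjoin β t t') :
    Adjoin β (.node l [t]) (.node l [t']) := Adjoin.step l [] [] h

theorem adj_child2a {β t t' : Tr} (l : Lab Tm NT NB) (u : Tr) (h : Adjoin β t t') :
    Adjoin β (.node l [t, u]) (.node l [t', u]) := Adjoin.step l [] [u] h

theorem adj_stk {β t t' : Tr} (j : ℕ) (h : Adjoin β t t') :
    Adjoin β (stk j t) (stk j t') := by
  induction j with
  | zero => exact h
  | succ j ih => exact adj_child2a _ _ ih

theorem adj_lyj {β t t' : Tr} (j : ℕ) (h : Adjoin β t t') :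
    Adjoin β (lyj j t) (lyj j t') := by
  induction j with
  | zero => exact h
  | succ j ih => exact adj_child1 _ ih

theorem stk_one (j : ℕ) (t : Tr) :
    stk j (.node (.anode 0) [t, trD]) = .node (.anode 0) [stk j t, trD] := by
  induction j with
  | zero => rfl
  | succ j ih => simp only [stk, ih]

theorem lyj_one (j : ℕ) (t : Tr) :
    lyj j (.node (.anode 1) [t]) = .node (.anode 1) [lyj j t] := by
  induction j with
  | zero => rfl
  | succ j ih => simp only [lyj, ih]

/- derivedness of the complete trees -/

theorem derived_btree (m : ℕ) : LTAG0.Derived G (btree m) := by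
  induction m with
  | zero =>
    refine LTAG0.Derived.subst 2 (LTAG0.Derived.init (show αB ∈ G.initial by simp [G]))
      derived_trC ?_
    exact ReplaceSubst.step _ [] []
      (ReplaceSubst.step _ [tb] [] (ReplaceSubst.here rfl))
  | succ m ih =>
    refine LTAG0.Derived.adjoin ih derived_βb' ?_
    have h := adj_stk m (adjoin_b (pch m))
    rw [show (LTree.node (.anode 0) [markQ (.node (.anode 0) [tb, pch m]), trD] : Tr) =
      .node (.anode 0) [markQ (pch (m+1)), trD] from rfl, stk_one] at h
    exact adj_child1 _ h

theorem derived_bpart (k i : ℕ) :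
    LTAG0.Derived G (.node (.nonterm 1) [stk i (apart k i)]) := by
  induction k with
  | zero =>
    refine LTAG0.Derived.adjoin (derived_btree i) derived_βa1' ?_
    exact adj_child1 _ (adj_stk i (adjoin_a1 (pch i)))
  | succ k ih =>
    refine LTAG0.Derived.adjoin ih derived_βa2' ?_
    refine adj_child1 _ (adj_stk i ?_)
    have h := adj_lyj k (adjoin_a2 (ach k (pch (i+1))))
    rw [show (LTree.node (.anode 1)
        [A2 (.node (.anode 1) [ta, .node (.anode 1) [ach k (pch (i+1)), trC]])] : Tr) =
      .node (.anode 1) [A2 (ach (k+1) (pch (i+1)))] from rfl] at h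
    rw [lyj_one] at h
    exact adj_child1 _ h

theorem derived_sfull (k i : ℕ) : LTAG0.Derived G (sfull k i) := by
  have hS : LTAG0.Derived G (.node (.nonterm 0) [ta, lB, trD] : Tr) := by
    refine LTAG0.Derived.subst 3 (LTAG0.Derived.init (show αS ∈ G.initial by simp [G]))
      derived_trD ?_
    exact ReplaceSubst.step _ [ta, lB] [] (ReplaceSubst.here rfl)
  cases k with
  | zero =>
    refine LTAG0.Derived.subst 1 hS (derived_btree i) ?_
    exact ReplaceSubst.step _ [ta] [trD] (ReplaceSubst.here rfl)
  | succ k =>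
    refine LTAG0.Derived.subst 1 hS (derived_bpart k i) ?_
    exact ReplaceSubst.step _ [ta] [trD] (ReplaceSubst.here rfl)

/- completeness and yields of the constructed trees -/

theorem complete_pch (i : ℕ) : Complete (pch i) := by
  induction i with
  | zero => simp [pch]
  | succ i ih => simp [pch, ih]

theorem complete_stk {t : Tr} (j : ℕ) (h : Complete t) : Complete (stk j t) := by
  induction j with
  | zero => exact h
  | succ j ih => simp [stk, ih]

theorem complete_markQ {s : Tr} (h : Complete s) : Complete (markQ s) := by
  simp [markQ, h]

theorem complete_ach {u : Tr} (k : ℕ) (h : Complete u) : Complete (ach k u) := by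
  induction k with
  | zero => exact h
  | succ k ih => simp [ach, ih]

theorem complete_lyj {t : Tr} (j : ℕ) (h : Complete t) : Complete (lyj j t) := by
  induction j with
  | zero => exact h
  | succ j ih => simp [lyj, ih]

theorem complete_A2 {u : Tr} (h : Complete u) : Complete (A2 u) := by
  simp [A2, h]

theorem complete_sfull (k i : ℕ) : Complete (sfull k i) := by
  cases k with
  | zero =>
    have h2 := complete_stk i (complete_markQ (complete_pch i))
    simp [sfull, btree, h2]
  | succ k =>
    have h1 : Complete (apart k i) := by
      have h0 := complete_lyj k (complete_A2 (complete_ach k (complete_pch (i+1))))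
      simpa [apart] using h0
    have h2 := complete_stk i h1
    simp [sfull, h2]

theorem yield_pch (i : ℕ) : yield (pch i) = List.replicate i 1 ++ [2] := by
  induction i with
  | zero => simp [pch]
  | succ i ih => simp [pch, ih, List.replicate_succ]

theorem yield_stk (j : ℕ) (t : Tr) : yield (stk j t) = yield t ++ List.replicate j 3 := by
  induction j with
  | zero => simp [stk]
  | succ j ih => simp [stk, ih, List.replicate_succ, List.append_assoc]

theorem yield_lyj (j : ℕ) (t : Tr) : yield (lyj j t) = yield t := by
  induction j with
  | zero => rfl
  | succ j ih => simp [lyj, ih]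

theorem yield_ach (k : ℕ) (u : Tr) :
    yield (ach k u) = List.replicate k 0 ++ yield u ++ List.replicate k 2 := by
  induction k with
  | zero => simp [ach]
  | succ k ih => simp [ach, ih, List.replicate_succ, List.append_assoc]

theorem yield_sfull (k i : ℕ) :
    yield (sfull k i) = List.replicate (k+1) 0 ++ List.replicate (i+1) 1 ++
      List.replicate (k+1) 2 ++ List.replicate (i+1) 3 := by
  cases k with
  | zero =>
    simp only [sfull, btree]
    simp [yield_stk, markQ, yield_pch, List.replicate_succ, List.append_assoc]
  | succ k =>
    simp only [sfull]
    simp [yield_stk, apart, yield_lyj, A2, yield_ach, yield_pch,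
      List.replicate_succ, List.append_assoc]

theorem root_sfull (k i : ℕ) : rootLabel (sfull k i) = .nonterm 0 := by
  cases k <;> rfl

end CD

namespace CD
open LTree

@[simp] theorem tC_term (x : Tm) (cs) : termCount (.node (.term x) cs : Tr) = 1 := by
  simp [termCount]
@[simp] theorem tC_nonterm (A : NT) (cs) :
    termCount (.node (.nonterm A) cs : Tr) = termCounts cs := by simp [termCount]
@[simp] theorem tC_anode (n : NB) (cs) :
    termCount (.node (.anode n) cs : Tr) = termCounts cs := by simp [termCount]
@[simp] theorem tC_adj (n : NB) (cs) :
    termCount (.node (.adj n) cs : Tr) = termCounts cs := by simp [termCount]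
@[simp] theorem tC_subst (A : NT) (cs) :
    termCount (.node (.substLeaf A) cs : Tr) = termCounts cs := by simp [termCount]
@[simp] theorem tC_foot (n : NB) (cs) :
    termCount (.node (.foot n) cs : Tr) = termCounts cs := by simp [termCount]
@[simp] theorem tCs_nil : termCounts ([] : List Tr) = 0 := by simp [termCounts]
@[simp] theorem tCs_cons (t : Tr) (ts) :
    termCounts (t :: ts) = termCount t + termCounts ts := by simp [termCounts]

@[simp] theorem fC_foot (n : NB) (cs) :
    footCount (.node (.foot n) cs : Tr) = 1 + footCounts cs := by simp [footCount]
@[simp] theorem fC_term (x : Tm) (cs) :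
    footCount (.node (.term x) cs : Tr) = footCounts cs := by simp [footCount]
@[simp] theorem fC_nonterm (A : NT) (cs) :
    footCount (.node (.nonterm A) cs : Tr) = footCounts cs := by simp [footCount]
@[simp] theorem fC_anode (n : NB) (cs) :
    footCount (.node (.anode n) cs : Tr) = footCounts cs := by simp [footCount]
@[simp] theorem fC_adj (n : NB) (cs) :
    footCount (.node (.adj n) cs : Tr) = footCounts cs := by simp [footCount]
@[simp] theorem fC_subst (A : NT) (cs) :
    footCount (.node (.substLeaf A) cs : Tr) = footCounts cs := by simp [footCount]
@[simp] theorem fCs_nil : footCounts ([] : List Tr) = 0 := by simp [footCounts]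
@[simp] theorem fCs_cons (t : Tr) (ts) :
    footCounts (t :: ts) = footCount t + footCounts ts := by simp [footCounts]

theorem subtree_inv {u : Tr} {l cs} (h : Subtree u (.node l cs)) :
    u = .node l cs ∨ ∃ c ∈ cs, Subtree u c := by
  cases h with
  | refl => exact Or.inl rfl
  | child l cs hmem hsub => exact Or.inr ⟨_, hmem, hsub⟩

theorem sub_leafy {u : Tr} {l} (h : Subtree u (.node l [])) : u = .node l [] := by
  rcases subtree_inv h with rfl | ⟨c, hc, _⟩
  · rfl
  · simp at hc

theorem wf : G.WellFormed := by
  refine ⟨?_, ?_, ?_, ?_, ?_, ?_⟩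
  · exact (((Set.finite_singleton trD).insert trC).insert αB).insert αS
  · exact ((Set.finite_singleton βa2).insert βa1).insert βb
  · intro t ht
    simp only [G, Set.mem_union, Set.mem_insert_iff, Set.mem_singleton_iff] at ht
    rcases ht with (rfl | rfl | rfl | rfl) | (rfl | rfl | rfl) <;>
      simp [αS, αB, trC, trD, βb, βa1, βa2, ta, tb, tc, td, lB, lC, lD, fQ, fR, markQ]
  · intro t ht
    simp only [G, Set.mem_insert_iff, Set.mem_singleton_iff] at ht
    rcases ht with rfl | rfl | rfl | rfl
    · exact ⟨⟨0, rfl⟩, by simp [αS, ta, lB, lD]⟩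
    · exact ⟨⟨1, rfl⟩, by simp [αB, tb, lC]⟩
    · exact ⟨⟨2, rfl⟩, by simp [trC, tc]⟩
    · exact ⟨⟨3, rfl⟩, by simp [trD, td]⟩
  · intro t ht
    simp only [G, Set.mem_insert_iff, Set.mem_singleton_iff] at ht
    rcases ht with rfl | rfl | rfl
    · refine ⟨0, rfl, by simp [βb, tb, fQ, lD, markQ], ?_⟩
      intro u hu m hm
      rw [βb] at hu
      rcases subtree_inv hu with rfl | ⟨c, hc, hu⟩
      · simp [rootLabel] at hm
      · simp only [List.mem_cons, List.mem_singleton, List.not_mem_nil, or_false] at hc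
        rcases hc with rfl | rfl
        · rcases subtree_inv hu with rfl | ⟨c, hc, hu⟩
          · simp [rootLabel] at hm
          · simp only [List.mem_cons, List.mem_singleton, List.not_mem_nil, or_false] at hc
            rcases hc with rfl | rfl
            · rw [tb] at hu; rw [sub_leafy hu] at hm; simp [rootLabel] at hm
            · rw [fQ] at hu; rw [sub_leafy hu] at hm
              injection hm with hm; first | exact hm | exact hm.symm
        · rw [lD] at hu; rw [sub_leafy hu] at hm; simp [rootLabel] at hm
    · refine ⟨0, rfl, by simp [βa1, ta, fQ, lC], ?_⟩
      intro u hu m hm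
      rw [βa1] at hu
      rcases subtree_inv hu with rfl | ⟨c, hc, hu⟩
      · simp [rootLabel] at hm
      · simp only [List.mem_singleton] at hc
        subst hc
        rcases subtree_inv hu with rfl | ⟨c, hc, hu⟩
        · simp [rootLabel] at hm
        · simp only [List.mem_cons, List.mem_singleton, List.not_mem_nil, or_false] at hc
          rcases hc with rfl | rfl
          · rw [ta] at hu; rw [sub_leafy hu] at hm; simp [rootLabel] at hm
          · rcases subtree_inv hu with rfl | ⟨c, hc, hu⟩
            · simp [rootLabel] at hm
            · simp only [List.mem_cons, List.mem_singleton, List.not_mem_nil, or_false] at hc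
              rcases hc with rfl | rfl
              · rw [fQ] at hu; rw [sub_leafy hu] at hm
                injection hm with hm; first | exact hm | exact hm.symm
              · rw [lC] at hu; rw [sub_leafy hu] at hm; simp [rootLabel] at hm
    · refine ⟨1, rfl, by simp [βa2, ta, fR, lC], ?_⟩
      intro u hu m hm
      rw [βa2] at hu
      rcases subtree_inv hu with rfl | ⟨c, hc, hu⟩
      · simp [rootLabel] at hm
      · simp only [List.mem_singleton] at hc
        subst hc
        rcases subtree_inv hu with rfl | ⟨c, hc, hu⟩
        · simp [rootLabel] at hm
        · simp only [List.mem_cons, List.mem_singleton, List.not_mem_nil, or_false] at hc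
          rcases hc with rfl | rfl
          · rw [ta] at hu; rw [sub_leafy hu] at hm; simp [rootLabel] at hm
          · rcases subtree_inv hu with rfl | ⟨c, hc, hu⟩
            · simp [rootLabel] at hm
            · simp only [List.mem_cons, List.mem_singleton, List.not_mem_nil, or_false] at hc
              rcases hc with rfl | rfl
              · rw [fR] at hu; rw [sub_leafy hu] at hm
                injection hm with hm; first | exact hm | exact hm.symm
              · rw [lC] at hu; rw [sub_leafy hu] at hm; simp [rootLabel] at hm
  · intro t ht u hu hadj
    obtain ⟨n, hn⟩ := hadj
    simp only [G, Set.mem_union, Set.mem_insert_iff, Set.mem_singleton_iff] at ht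
    rcases ht with (rfl | rfl | rfl | rfl) | (rfl | rfl | rfl)
    · -- αS has no adj nodes
      rw [αS] at hu
      rcases subtree_inv hu with rfl | ⟨c, hc, hu⟩
      · simp [rootLabel] at hn
      · simp only [List.mem_cons, List.mem_singleton, List.not_mem_nil, or_false] at hc
        rcases hc with rfl | rfl | rfl <;>
          first
          | (rw [ta] at hu; rw [sub_leafy hu] at hn; simp [rootLabel] at hn)
          | (rw [lB] at hu; rw [sub_leafy hu] at hn; simp [rootLabel] at hn)
          | (rw [lD] at hu; rw [sub_leafy hu] at hn; simp [rootLabel] at hn)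
    · rw [αB] at hu
      rcases subtree_inv hu with rfl | ⟨c, hc, hu⟩
      · simp [rootLabel] at hn
      · simp only [List.mem_singleton] at hc
        subst hc
        rcases subtree_inv hu with rfl | ⟨c, hc, hu⟩
        · simp [tb, lC]
        · simp only [List.mem_cons, List.mem_singleton, List.not_mem_nil, or_false] at hc
          rcases hc with rfl | rfl <;>
            first
            | (rw [tb] at hu; rw [sub_leafy hu] at hn; simp [rootLabel] at hn)
            | (rw [lC] at hu; rw [sub_leafy hu] at hn; simp [rootLabel] at hn)
    · rw [trC] at hu
      rcases subtree_inv hu with rfl | ⟨c, hc, hu⟩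
      · simp [rootLabel] at hn
      · simp only [List.mem_singleton] at hc; subst hc
        rw [tc] at hu; rw [sub_leafy hu] at hn; simp [rootLabel] at hn
    · rw [trD] at hu
      rcases subtree_inv hu with rfl | ⟨c, hc, hu⟩
      · simp [rootLabel] at hn
      · simp only [List.mem_singleton] at hc; subst hc
        rw [td] at hu; rw [sub_leafy hu] at hn; simp [rootLabel] at hn
    · rw [βb] at hu
      rcases subtree_inv hu with rfl | ⟨c, hc, hu⟩
      · simp [rootLabel] at hn
      · simp only [List.mem_cons, List.mem_singleton, List.not_mem_nil, or_false] at hc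
        rcases hc with rfl | rfl
        · rcases subtree_inv hu with rfl | ⟨c, hc, hu⟩
          · simp [tb, fQ]
          · simp only [List.mem_cons, List.mem_singleton, List.not_mem_nil, or_false] at hc
            rcases hc with rfl | rfl <;>
              first
              | (rw [tb] at hu; rw [sub_leafy hu] at hn; simp [rootLabel] at hn)
              | (rw [fQ] at hu; rw [sub_leafy hu] at hn; simp [rootLabel] at hn)
        · rw [lD] at hu; rw [sub_leafy hu] at hn; simp [rootLabel] at hn
    · rw [βa1] at hu
      rcases subtree_inv hu with rfl | ⟨c, hc, hu⟩
      · simp [rootLabel] at hn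
      · simp only [List.mem_singleton] at hc; subst hc
        rcases subtree_inv hu with rfl | ⟨c, hc, hu⟩
        · simp [ta, fQ, lC]
        · simp only [List.mem_cons, List.mem_singleton, List.not_mem_nil, or_false] at hc
          rcases hc with rfl | rfl
          · rw [ta] at hu; rw [sub_leafy hu] at hn; simp [rootLabel] at hn
          · rcases subtree_inv hu with rfl | ⟨c, hc, hu⟩
            · simp [rootLabel] at hn
            · simp only [List.mem_cons, List.mem_singleton, List.not_mem_nil, or_false] at hc
              rcases hc with rfl | rfl <;>
                first
                | (rw [fQ] at hu; rw [sub_leafy hu] at hn; simp [rootLabel] at hn)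
                | (rw [lC] at hu; rw [sub_leafy hu] at hn; simp [rootLabel] at hn)
    · rw [βa2] at hu
      rcases subtree_inv hu with rfl | ⟨c, hc, hu⟩
      · simp [rootLabel] at hn
      · simp only [List.mem_singleton] at hc; subst hc
        rcases subtree_inv hu with rfl | ⟨c, hc, hu⟩
        · simp [ta, fR, lC]
        · simp only [List.mem_cons, List.mem_singleton, List.not_mem_nil, or_false] at hc
          rcases hc with rfl | rfl
          · rw [ta] at hu; rw [sub_leafy hu] at hn; simp [rootLabel] at hn
          · rcases subtree_inv hu with rfl | ⟨c, hc, hu⟩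
            · simp [rootLabel] at hn
            · simp only [List.mem_cons, List.mem_singleton, List.not_mem_nil, or_false] at hc
              rcases hc with rfl | rfl <;>
                first
                | (rw [fR] at hu; rw [sub_leafy hu] at hn; simp [rootLabel] at hn)
                | (rw [lC] at hu; rw [sub_leafy hu] at hn; simp [rootLabel] at hn)

theorem lang : G.language = {x : List Tm | ∃ n m : ℕ, 1 ≤ n ∧ 1 ≤ m ∧
    x = List.replicate n (0 : Fin 4) ++ List.replicate m 1 ++
        List.replicate n 2 ++ List.replicate m 3} := by
  ext w
  constructor
  · rintro ⟨t, hd, hroot, hcomp, rfl⟩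
    have hinv := derived_inv hd
    have hroot' : rootLabel t = .nonterm 0 := hroot
    have hst : ST t := by
      rcases inv_nonterm hinv hroot' with ⟨_, h⟩ | ⟨h0, _⟩ | ⟨h0, _⟩ | ⟨h0, _⟩
      · exact h
      · exact absurd h0 (by decide)
      · exact absurd h0 (by decide)
      · exact absurd h0 (by decide)
    obtain ⟨n, m, hn, hm, hy⟩ := y_ST hst hcomp
    exact ⟨n, m, hn, hm, hy⟩
  · rintro ⟨n, m, hn, hm, rfl⟩
    refine ⟨sfull (n-1) (m-1), derived_sfull _ _, root_sfull _ _, complete_sfull _ _, ?_⟩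
    rw [yield_sfull]
    have h1 : n - 1 + 1 = n := by omega
    have h2 : m - 1 + 1 = m := by omega
    rw [h1, h2]

end CD

/-- There exists a well-formed LTAG₀ grammar generating the crossed-dependency
language { aⁿ bᵐ cⁿ dᵐ : n, m ≥ 1 }. -/
theorem exists_ltag0_crossed :
    ∃ (NS NA : Type) (g : LTAG0 (Fin 4) NS NA), g.WellFormed ∧
      g.language = {x | ∃ n m : ℕ, 1 ≤ n ∧ 1 ≤ m ∧
        x = List.replicate n (0 : Fin 4) ++ List.replicate m 1 ++
            List.replicate n 2 ++ List.replicate m 3} := by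
  exact ⟨Fin 4, Fin 2, CD.G, CD.wf, CD.lang⟩
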